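/- Let 𝒜 be a finite set with |𝒜| = K where 2 ≤ K, let T ∈ ℕ with K ≤ T, let T_S : 𝒜 → ℕ, and let ρ ∈ (0, 1]. Suppose (τ*, n*) is an optimal solution for the LP (with T_S regarded as real-valued and budget T). Then for every N : 𝒜 → ℕ with ∑_{a∈𝒜} N(a) = T, one has ∑_{a∈𝒜} ∑_{k=1}^{N(a)} (k + T_S(a))^{−ρ/2} ≤ (2/(1 − ρ/2))·T·τ*^{−ρ/2}. -/

import Mathlib

/-- `(τ, n)` is a feasible pair for the LP with offline sample sizes `TS` and budget `T`. -/
def LPfeasible {α : Type*} [Fintype α] (TS : α → ℝ) (T : ℝ) (τ : ℝ) (n : α → ℝ) : Prop :=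
  0 ≤ τ ∧ (∀ a, 0 ≤ n a) ∧ (∑ a, n a) = T ∧ ∀ a, τ ≤ TS a + n a

/-- Bernoulli-type bound: `p * x^(p-1) ≤ x^p - (x-1)^p` for `x ≥ 1`, `0 < p ≤ 1`. -/
lemma aux_bernoulli {p x : ℝ} (hp0 : 0 < p) (hp1 : p ≤ 1) (hx : 1 ≤ x) :
    p * x ^ (p - 1) ≤ x ^ p - (x - 1) ^ p := by
  have hx0 : (0 : ℝ) < x := lt_of_lt_of_le one_pos hx
  have h1 : x - 1 = x * (1 + (-(1 / x))) := by field_simp; ring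
  have hs : (-1 : ℝ) ≤ -(1 / x) := by
    have : 1 / x ≤ 1 := by
      rw [div_le_one hx0]; exact hx
    linarith
  have hb : (1 + (-(1 / x))) ^ p ≤ 1 + p * (-(1 / x)) :=
    rpow_one_add_le_one_add_mul_self hs hp0.le hp1
  have h2 : (x - 1) ^ p = x ^ p * (1 + (-(1 / x))) ^ p := by
    rw [h1, Real.mul_rpow hx0.le (by linarith)]
  have h3 : (x - 1) ^ p ≤ x ^ p * (1 + p * (-(1 / x))) := by
    rw [h2]
    exact mul_le_mul_of_nonneg_left hb (Real.rpow_nonneg hx0.le p)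
  have h4 : x ^ p * (1 + p * (-(1 / x))) = x ^ p - p * x ^ (p - 1) := by
    rw [Real.rpow_sub_one hx0.ne']
    field_simp
    ring
  linarith [h3, h4.symm.le]

/-- Concavity chord bound: `τ^p - max (τ - m) 0 ^ p ≤ m * τ^(p-1)` for `τ > 0`, `m ≥ 0`. -/
lemma aux_chord {p τ m : ℝ} (hp0 : 0 < p) (hp1 : p ≤ 1) (hτ : 0 < τ) (hm : 0 ≤ m) :
    τ ^ p - max (τ - m) 0 ^ p ≤ m * τ ^ (p - 1) := by
  rcases le_or_gt τ m with h | h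
  · have : max (τ - m) 0 = 0 := max_eq_right (by linarith)
    rw [this, Real.zero_rpow hp0.ne']
    have : τ ^ p = τ * τ ^ (p - 1) := by
      rw [Real.rpow_sub_one hτ.ne']; field_simp
    rw [this]
    exact sub_le_iff_le_add.mpr (by
      have := mul_le_mul_of_nonneg_right h (Real.rpow_nonneg hτ.le (p - 1))
      linarith)
  · have hτm : 0 < τ - m := by linarith
    have hmax : max (τ - m) 0 = τ - m := max_eq_left hτm.le
    rw [hmax]
    have h1 : τ - m = τ * (1 - m / τ) := by field_simp
    have hu0 : 0 < 1 - m / τ := by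
      have : m / τ < 1 := (div_lt_one hτ).mpr h
      linarith
    have hu1 : 1 - m / τ ≤ 1 := by
      have : 0 ≤ m / τ := div_nonneg hm hτ.le
      linarith
    have h2 : (τ - m) ^ p = τ ^ p * (1 - m / τ) ^ p := by
      rw [h1, Real.mul_rpow hτ.le hu0.le]
    have h3 : 1 - m / τ ≤ (1 - m / τ) ^ p := by
      simpa using Real.rpow_le_rpow_of_exponent_ge hu0 hu1 hp1
    have h4 : τ ^ p * (1 - m / τ) ≤ (τ - m) ^ p := by
      rw [h2]
      exact mul_le_mul_of_nonneg_left h3 (Real.rpow_nonneg hτ.le p)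
    have h5 : τ ^ p * (1 - m / τ) = τ ^ p - m * τ ^ (p - 1) := by
      rw [Real.rpow_sub_one hτ.ne']
      field_simp
    linarith [h4, h5.symm.le]

/-- Key combinatorial step in the instance-independent regret upper bound of MIN-COMB-UCB. -/
theorem comb_radii_sum_bound
    {α : Type*} [Fintype α]
    (K : ℕ) (hK : Fintype.card α = K) (h2K : 2 ≤ K)
    (T : ℕ) (hKT : K ≤ T) (TS : α → ℕ)
    (ρ : ℝ) (hρ0 : 0 < ρ) (hρ1 : ρ ≤ 1)
    (τstar : ℝ) (nstar : α → ℝ)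
    (hfeas : LPfeasible (fun a => (TS a : ℝ)) (T : ℝ) τstar nstar)
    (hopt : ∀ τ n, LPfeasible (fun a => (TS a : ℝ)) (T : ℝ) τ n → τ ≤ τstar) :
    ∀ N : α → ℕ, ∑ a, N a = T →
      ∑ a, ∑ k ∈ Finset.Icc 1 (N a), ((k : ℝ) + (TS a : ℝ)) ^ (-(ρ / 2)) ≤
        (2 / (1 - ρ / 2)) * (T : ℝ) * τstar ^ (-(ρ / 2)) := by
  intro N hN
  set β : ℝ := ρ / 2 with hβ
  set p : ℝ := 1 - β with hpdef
  have hβ0 : 0 < β := by positivity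
  have hβ1 : β ≤ 1 / 2 := by simp only [hβ]; linarith
  have hp0 : 0 < p := by simp only [hpdef]; linarith
  have hp1 : p ≤ 1 := by simp only [hpdef]; linarith
  have hpβ : p - 1 = -β := by simp [hpdef]
  have hK0 : 0 < (K : ℝ) := by positivity
  -- τstar ≥ 1
  have hτ1 : 1 ≤ τstar := by
    apply hopt 1 (fun _ => (T : ℝ) / K)
    refine ⟨zero_le_one, fun a => by positivity, ?_, fun a => ?_⟩
    · rw [Finset.sum_const, Finset.card_univ, hK, nsmul_eq_mul]
      field_simp
    · have h1 : (1 : ℝ) ≤ (T : ℝ) / K := by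
        rw [le_div_iff₀ hK0, one_mul]
        exact_mod_cast hKT
      have h2 : (0 : ℝ) ≤ (TS a : ℝ) := Nat.cast_nonneg _
      linarith
  have hτ0 : 0 < τstar := lt_of_lt_of_le one_pos hτ1
  obtain ⟨-, hn0, hnsum, hτle⟩ := hfeas
  have hτβ0 : 0 ≤ τstar ^ (-β) := Real.rpow_nonneg hτ0.le _
  -- per-arm bound
  have harm : ∀ a : α, ∑ k ∈ Finset.Icc 1 (N a), ((k : ℝ) + (TS a : ℝ)) ^ (-β) ≤
      (N a : ℝ) * τstar ^ (-β) + nstar a * τstar ^ (-β) / p := by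
    intro a
    set S : ℝ := (TS a : ℝ) with hS
    have hS0 : 0 ≤ S := Nat.cast_nonneg _
    set g : ℕ → ℝ := fun i => (min ((i : ℝ) + S) τstar) ^ p with hg
    have hterm : ∀ i : ℕ, (((1 + i : ℕ) : ℝ) + S) ^ (-β) ≤
        τstar ^ (-β) + (g (i + 1) - g i) / p := by
      intro i
      have hx1 : (1 : ℝ) ≤ ((1 + i : ℕ) : ℝ) + S := by
        push_cast; linarith [Nat.cast_nonneg (α := ℝ) i]
      set x : ℝ := ((1 + i : ℕ) : ℝ) + S with hxdef
      have hxi : (i : ℝ) + S = x - 1 := by simp [hxdef]; push_cast; ring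
      have hx0 : (0 : ℝ) < x := lt_of_lt_of_le one_pos hx1
      rcases le_or_gt τstar x with h | h
      · -- big term
        have h1 : x ^ (-β) ≤ τstar ^ (-β) :=
          Real.rpow_le_rpow_of_nonpos hτ0 h (by linarith)
        have h2 : 0 ≤ g (i + 1) - g i := by
          have ha : min (((i : ℕ) + 1 : ℝ) + S) τstar = τstar := by
            apply min_eq_right
            have : x = ((i : ℕ) + 1 : ℝ) + S := by rw [hxdef]; push_cast; ring
            linarith [this ▸ h]
          have hb : min ((i : ℝ) + S) τstar ≤ τstar := min_le_right _ _
          have hb0 : 0 ≤ min ((i : ℝ) + S) τstar :=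
            le_min (by positivity) hτ0.le
          simp only [hg]
          push_cast
          rw [ha]
          exact sub_nonneg.mpr (Real.rpow_le_rpow hb0 hb hp0.le)
        have := div_nonneg h2 hp0.le
        -- note g uses ((i+1 : ℕ) : ℝ) = (i:ℝ)+1
        linarith
      · -- small term
        have hxeq : ((i : ℕ) + 1 : ℝ) + S = x := by rw [hxdef]; push_cast; ring
        have hx1' : min (((i : ℕ) + 1 : ℝ) + S) τstar = x := by
          rw [hxeq]; exact min_eq_left h.le
        have hx2' : min ((i : ℝ) + S) τstar = x - 1 := by
          rw [hxi]; exact min_eq_left (by linarith)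
        have hber := aux_bernoulli hp0 hp1 hx1
        have hxg : g (i + 1) - g i = x ^ p - (x - 1) ^ p := by
          simp only [hg]
          push_cast
          rw [hx1', hx2']
        have hxpow : x ^ (-β) = x ^ (p - 1) := by rw [hpβ]
        rw [hxpow, hxg]
        have : x ^ (p - 1) ≤ (x ^ p - (x - 1) ^ p) / p := by
          rw [le_div_iff₀ hp0]
          linarith [hber]
        linarith
    calc ∑ k ∈ Finset.Icc 1 (N a), ((k : ℝ) + S) ^ (-β)
        = ∑ i ∈ Finset.range (N a), (((1 + i : ℕ) : ℝ) + S) ^ (-β) := by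
          rw [← Finset.Ico_add_one_right_eq_Icc, Finset.sum_Ico_eq_sum_range]
          simp
      _ ≤ ∑ i ∈ Finset.range (N a), (τstar ^ (-β) + (g (i + 1) - g i) / p) :=
          Finset.sum_le_sum (fun i _ => hterm i)
      _ = (N a : ℝ) * τstar ^ (-β) + (g (N a) - g 0) / p := by
          rw [Finset.sum_add_distrib, Finset.sum_const, Finset.card_range,
            ← Finset.sum_div, Finset.sum_range_sub]
          simp [nsmul_eq_mul]
      _ ≤ (N a : ℝ) * τstar ^ (-β) + nstar a * τstar ^ (-β) / p := by
          have hgN : g (N a) ≤ τstar ^ p := by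
            apply Real.rpow_le_rpow (le_min (by positivity) hτ0.le) (min_le_right _ _) hp0.le
          have hg0 : max (τstar - nstar a) 0 ^ p ≤ g 0 := by
            apply Real.rpow_le_rpow (le_max_right _ _) _ hp0.le
            simp only [hg, Nat.cast_zero, zero_add]
            have h1 : τstar - nstar a ≤ S := by
              have := hτle a
              simp only [← hS] at this ⊢
              linarith [this]
            exact max_le (le_min h1 (by linarith [hn0 a])) (le_min hS0 hτ0.le)
          have hdiff : g (N a) - g 0 ≤ nstar a * τstar ^ (-β) := by
            have hc := aux_chord hp0 hp1 hτ0 (hn0 a)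
            rw [hpβ] at hc
            linarith
          have := (div_le_div_iff_of_pos_right hp0).mpr hdiff
          linarith
  -- sum over arms
  have hsum : ∑ a, ∑ k ∈ Finset.Icc 1 (N a), ((k : ℝ) + (TS a : ℝ)) ^ (-β) ≤
      (T : ℝ) * τstar ^ (-β) + (T : ℝ) * τstar ^ (-β) / p := by
    calc ∑ a, ∑ k ∈ Finset.Icc 1 (N a), ((k : ℝ) + (TS a : ℝ)) ^ (-β)
        ≤ ∑ a, ((N a : ℝ) * τstar ^ (-β) + nstar a * τstar ^ (-β) / p) :=
          Finset.sum_le_sum (fun a _ => harm a)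
      _ = (T : ℝ) * τstar ^ (-β) + (T : ℝ) * τstar ^ (-β) / p := by
          rw [Finset.sum_add_distrib, ← Finset.sum_mul]
          congr 1
          · congr 1
            rw [← Nat.cast_sum, hN]
          · rw [← Finset.sum_div, ← Finset.sum_mul, hnsum]
  have hfinal : (T : ℝ) * τstar ^ (-β) + (T : ℝ) * τstar ^ (-β) / p ≤
      (2 / p) * (T : ℝ) * τstar ^ (-β) := by
    set A := (T : ℝ) * τstar ^ (-β) with hA
    have hA0 : 0 ≤ A := by positivity
    have h1 : A ≤ A / p := by
      rw [le_div_iff₀ hp0]; nlinarith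
    have h2 : (2 / p) * (T : ℝ) * τstar ^ (-β) = A / p + A / p := by
      rw [hA]; field_simp; ring
    rw [h2]; linarith
  calc ∑ a, ∑ k ∈ Finset.Icc 1 (N a), ((k : ℝ) + (TS a : ℝ)) ^ (-(ρ/2))
      ≤ (T : ℝ) * τstar ^ (-β) + (T : ℝ) * τstar ^ (-β) / p := hsum
    _ ≤ (2 / p) * (T : ℝ) * τstar ^ (-β) := hfinal
    _ = (2 / (1 - ρ / 2)) * (T : ℝ) * τstar ^ (-(ρ/2)) := by rw [hpdef, hβ]
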